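/- Let Γ_1 and Γ_2 be connected induced subgraphs of a finite simple graph Γ such that Γ_1 ∩ Γ_2 = {v} for a single vertex v, and such that there are no edges in Γ between Γ_1 ∖ {v} and Γ_2 ∖ {v}. Then the defect 1 group of Γ_1 ∪ Γ_2 with defect set {v} is the direct product of the defect 1 group of Γ_1 with defect set {v} and the defect 1 group of Γ_2 with defect set {v}. -/

import Mathlib

set_option linter.unusedSectionVars false
set_option maxHeartbeats 1000000


variable {V : Type*}

/-- The elementary collapsing `e_{uv}`: sends `u` to `v` and fixes every other vertex. -/
def collapse [DecidableEq V] (u v : V) : Function.End V :=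
  fun x => if x = u then v else x

/-- The flow semigroup of a digraph with edge relation `E`. -/
def flowSemigroup [DecidableEq V] (E : V → V → Prop) : Subsemigroup (Function.End V) :=
  Subsemigroup.closure {f | ∃ u v, E u v ∧ f = collapse u v}

/-- The defect group `G_{k,K}` of the digraph `E` with defect set `K`. -/
def defectGroup [DecidableEq V] (E : V → V → Prop) (K : Set V) :
    Subgroup (Equiv.Perm {x : V // x ∉ K}) :=
  Subgroup.closure {p | ∃ s ∈ flowSemigroup E,
    (∀ x ∈ K, s x ∉ K) ∧ ∀ (x : V) (h : x ∉ K), s x = ↑(p ⟨x, h⟩)}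



lemma collapse_apply_ne [DecidableEq V] {u w x : V} (h : x ≠ u) : collapse u w x = x := by
  simp [collapse, h]
lemma collapse_apply_self [DecidableEq V] (u w : V) : collapse u w u = w := by simp [collapse]

lemma collapse_image_of_not_mem [DecidableEq V] {u w : V} {X : Set V} (h : u ∉ X) :
    collapse u w '' X = X := by
  have : ∀ x ∈ X, collapse u w x = id x := by
    intro x hx
    simp only [collapse, id]
    rw [if_neg]; rintro rfl; exact h hx
  rw [Set.image_congr this, Set.image_id]

lemma collapse_image_of_mem [DecidableEq V] {u w : V} {X : Set V} (h : u ∈ X) :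
    collapse u w '' X = insert w (X \ {u}) := by
  ext y
  constructor
  · rintro ⟨x, hx, rfl⟩
    by_cases hxu : x = u
    · subst hxu; left; simp [collapse]
    · right; simp [collapse, if_neg hxu, hx, hxu]
  · rintro (rfl | ⟨hy, hyu⟩)
    · exact ⟨u, h, by simp [collapse]⟩
    · have : y ≠ u := by simpa using hyu
      exact ⟨y, hy, by simp [collapse, if_neg this]⟩

lemma shuffle1 {α : Type*} {A : Set α} {h u p : α} (hh : h ∈ A) (hup : u ≠ p) (huh : u ≠ h) :
    insert h ((insert p (A \ {h})) \ {u}) = insert p (A \ {u}) := by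
  ext x
  simp only [Set.mem_insert_iff, Set.mem_diff, Set.mem_singleton_iff]
  constructor
  · rintro (rfl | ⟨(rfl | ⟨hxA, hxh⟩), hxu⟩)
    · exact Or.inr ⟨hh, Ne.symm huh⟩
    · exact Or.inl rfl
    · exact Or.inr ⟨hxA, hxu⟩
  · rintro (rfl | ⟨hxA, hxu⟩)
    · exact Or.inr ⟨Or.inl rfl, Ne.symm hup⟩
    · by_cases hxh : x = h
      · exact Or.inl hxh
      · exact Or.inr ⟨Or.inr ⟨hxA, hxh⟩, hxu⟩

lemma shuffle2 {α : Type*} {A : Set α} {h p : α} (hh : h ∈ A) (hp : p ∉ A) :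
    insert h ((insert p (A \ {h})) \ {p}) = A := by
  ext x
  simp only [Set.mem_insert_iff, Set.mem_diff, Set.mem_singleton_iff]
  constructor
  · rintro (rfl | ⟨(rfl | ⟨hxA, _⟩), hxp⟩)
    · exact hh
    · exact absurd rfl hxp
    · exact hxA
  · intro hxA
    by_cases hxh : x = h
    · exact Or.inl hxh
    · exact Or.inr ⟨Or.inr ⟨hxA, hxh⟩, fun e => hp (e ▸ hxA)⟩

lemma flow_word [DecidableEq V] {E : V → V → Prop} {s : Function.End V}
    (hs : s ∈ flowSemigroup E) :
    ∃ l : List (Function.End V), l ≠ [] ∧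
      (∀ f ∈ l, ∃ u w, E u w ∧ f = collapse u w) ∧ l.prod = s := by
  refine Subsemigroup.closure_induction (p := fun t _ => ∃ l : List (Function.End V), l ≠ [] ∧
      (∀ f ∈ l, ∃ u w, E u w ∧ f = collapse u w) ∧ l.prod = t) ?_ ?_ hs
  · intro x hx
    exact ⟨[x], by simp, by simpa using hx, by simp⟩
  · rintro x y hx hy ⟨l₁, h₁ne, h₁g, rfl⟩ ⟨l₂, h₂ne, h₂g, rfl⟩
    refine ⟨l₁ ++ l₂, by simp [h₁ne], ?_, by simp⟩
    intro f hf
    rcases List.mem_append.mp hf with h | h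
    · exact h₁g f h
    · exact h₂g f h

lemma comp_inj_left [Finite V] {f g : V → V} (h : Function.Injective (f ∘ g)) :
    Function.Injective f := by
  have hg : Function.Injective g := fun a b hab => h (by simp [Function.comp, hab])
  have hgs : Function.Surjective g := Finite.injective_iff_surjective.mp hg
  intro a b hab
  obtain ⟨a', rfl⟩ := hgs a
  obtain ⟨b', rfl⟩ := hgs b
  exact congrArg g (h hab)

lemma flow_not_injective [Finite V] [DecidableEq V] {E : V → V → Prop}
    (hE : ∀ u w, E u w → u ≠ w) {s : Function.End V} (hs : s ∈ flowSemigroup E) :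
    ¬ Function.Injective s := by
  obtain ⟨l, hne, hg, rfl⟩ := flow_word hs
  intro hinj
  rcases l with _ | ⟨e, l⟩
  · exact hne rfl
  · rw [List.prod_cons] at hinj
    have he : Function.Injective e := comp_inj_left (f := e) (g := l.prod) hinj
    obtain ⟨u, w, hE', rfl⟩ := hg e (by simp)
    have h1 : collapse u w u = w := by simp [collapse]
    have h2 : collapse u w w = w := by simp [collapse, (hE u w hE').symm]
    exact hE u w hE' (he (h1.trans h2.symm))

section Setting
variable [DecidableEq V] (S₁ S₂ : Set V) (v : V)

def sideA : Set ↥(S₁ ∪ S₂) := {x | (x : V) ∈ S₁ ∧ (x : V) ≠ v}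
def sideB : Set ↥(S₁ ∪ S₂) := {x | (x : V) ∈ S₂ ∧ (x : V) ≠ v}

def vtxW (hv₁ : v ∈ S₁) : ↥(S₁ ∪ S₂) := ⟨v, Set.mem_union_left S₂ hv₁⟩

variable (hv₁ : v ∈ S₁)

def InvP (t : Function.End ↥(S₁ ∪ S₂)) (h : ↥(S₁ ∪ S₂)) : Prop :=
  (h = vtxW S₁ S₂ v hv₁ ∧ t '' sideA S₁ S₂ v = sideA S₁ S₂ v ∧
    t '' sideB S₁ S₂ v = sideB S₁ S₂ v) ∨
  (h ∈ sideA S₁ S₂ v ∧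
    t '' sideA S₁ S₂ v = insert (vtxW S₁ S₂ v hv₁) (sideA S₁ S₂ v \ {h}) ∧
    t '' sideB S₁ S₂ v = sideB S₁ S₂ v) ∨
  (h ∈ sideB S₁ S₂ v ∧
    t '' sideB S₁ S₂ v = insert (vtxW S₁ S₂ v hv₁) (sideB S₁ S₂ v \ {h}) ∧
    t '' sideA S₁ S₂ v = sideA S₁ S₂ v)

def Rel₁ (t : Function.End ↥(S₁ ∪ S₂)) (t₁ : Function.End ↥S₁) : Prop :=
  ∀ (x : ↥S₁), (x : V) ≠ v →
    ((t₁ x : ↥S₁) : V) = ((t ⟨(x : V), Set.mem_union_left S₂ x.2⟩ : ↥(S₁ ∪ S₂)) : V)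

def Rel₂ (t : Function.End ↥(S₁ ∪ S₂)) (t₂ : Function.End ↥S₂) : Prop :=
  ∀ (x : ↥S₂), (x : V) ≠ v →
    ((t₂ x : ↥S₂) : V) = ((t ⟨(x : V), Set.mem_union_right S₁ x.2⟩ : ↥(S₁ ∪ S₂)) : V)

def Good (Γ : SimpleGraph V) (t : Function.End ↥(S₁ ∪ S₂)) : Prop :=
  (∃ h, InvP S₁ S₂ v hv₁ t h) ∧
  (∃ t₁, (t₁ = 1 ∨ t₁ ∈ flowSemigroup (Γ.induce S₁).Adj) ∧ Rel₁ S₁ S₂ v t t₁) ∧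
  (∃ t₂, (t₂ = 1 ∨ t₂ ∈ flowSemigroup (Γ.induce S₂).Adj) ∧ Rel₂ S₁ S₂ v t t₂)

lemma mem_cases (x : ↥(S₁ ∪ S₂)) :
    x ∈ sideA S₁ S₂ v ∨ x ∈ sideB S₁ S₂ v ∨ x = vtxW S₁ S₂ v hv₁ := by
  by_cases hx : (x : V) = v
  · exact Or.inr (Or.inr (Subtype.ext hx))
  · rcases x.2 with h | h
    · exact Or.inl ⟨h, hx⟩
    · exact Or.inr (Or.inl ⟨h, hx⟩)

lemma sideA_disj (hinter : S₁ ∩ S₂ = {v}) {x : ↥(S₁ ∪ S₂)}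
    (hA : x ∈ sideA S₁ S₂ v) (hB : x ∈ sideB S₁ S₂ v) : False := by
  have : (x : V) ∈ S₁ ∩ S₂ := ⟨hA.1, hB.1⟩
  rw [hinter] at this
  exact hA.2 this

lemma vtxW_not_sideA : vtxW S₁ S₂ v hv₁ ∉ sideA S₁ S₂ v := fun h => h.2 rfl
lemma vtxW_not_sideB : vtxW S₁ S₂ v hv₁ ∉ sideB S₁ S₂ v := fun h => h.2 rfl

lemma sideA_ne_vtxW {x : ↥(S₁ ∪ S₂)} (h : x ∈ sideA S₁ S₂ v) : x ≠ vtxW S₁ S₂ v hv₁ :=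
  fun hx => h.2 (by rw [hx]; rfl)
lemma sideB_ne_vtxW {x : ↥(S₁ ∪ S₂)} (h : x ∈ sideB S₁ S₂ v) : x ≠ vtxW S₁ S₂ v hv₁ :=
  fun hx => h.2 (by rw [hx]; rfl)

lemma compl_vtxW : {x : ↥(S₁ ∪ S₂) | x ≠ vtxW S₁ S₂ v hv₁} = sideA S₁ S₂ v ∪ sideB S₁ S₂ v := by
  ext x
  constructor
  · intro hx
    rcases mem_cases S₁ S₂ v hv₁ x with h | h | h
    · exact Or.inl h
    · exact Or.inr h
    · exact absurd h hx
  · rintro (h | h)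
    · exact sideA_ne_vtxW S₁ S₂ v hv₁ h
    · exact sideB_ne_vtxW S₁ S₂ v hv₁ h

lemma InvP.image_union {t : Function.End ↥(S₁ ∪ S₂)} {h : ↥(S₁ ∪ S₂)}
    (hinter : S₁ ∩ S₂ = {v}) (hI : InvP S₁ S₂ v hv₁ t h) :
    t '' (sideA S₁ S₂ v ∪ sideB S₁ S₂ v) = {h}ᶜ := by
  rw [Set.image_union (f := t)]
  rcases hI with ⟨rfl, hA, hB⟩ | ⟨hh, hA, hB⟩ | ⟨hh, hB, hA⟩
  · rw [hA, hB]
    ext x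
    simp only [Set.mem_union, Set.mem_compl_iff, Set.mem_singleton_iff]
    constructor
    · rintro (h' | h')
      · exact sideA_ne_vtxW S₁ S₂ v hv₁ h'
      · exact sideB_ne_vtxW S₁ S₂ v hv₁ h'
    · intro hx
      rcases mem_cases S₁ S₂ v hv₁ x with h' | h' | h'
      · exact Or.inl h'
      · exact Or.inr h'
      · exact absurd h' hx
  · rw [hA, hB]
    ext x
    simp only [Set.mem_union, Set.mem_insert_iff, Set.mem_diff, Set.mem_singleton_iff,
      Set.mem_compl_iff]
    constructor
    · rintro ((rfl | ⟨hxA, hxh⟩) | hxB)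
      · exact Ne.symm (sideA_ne_vtxW S₁ S₂ v hv₁ hh)
      · exact hxh
      · rintro rfl; exact sideA_disj S₁ S₂ v hinter hh hxB
    · intro hx
      rcases mem_cases S₁ S₂ v hv₁ x with h' | h' | h'
      · exact Or.inl (Or.inr ⟨h', hx⟩)
      · exact Or.inr h'
      · exact Or.inl (Or.inl h')
  · rw [hA, hB]
    ext x
    simp only [Set.mem_union, Set.mem_insert_iff, Set.mem_diff, Set.mem_singleton_iff,
      Set.mem_compl_iff]
    constructor
    · rintro (hxA | (rfl | ⟨hxB, hxh⟩))
      · rintro rfl; exact sideA_disj S₁ S₂ v hinter hxA hh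
      · exact Ne.symm (sideB_ne_vtxW S₁ S₂ v hv₁ hh)
      · exact hxh
    · intro hx
      rcases mem_cases S₁ S₂ v hv₁ x with h' | h' | h'
      · exact Or.inl h'
      · exact Or.inr (Or.inr ⟨h', hx⟩)
      · exact Or.inr (Or.inl h')

lemma InvP.hole_not_mem {t : Function.End ↥(S₁ ∪ S₂)} {h : ↥(S₁ ∪ S₂)}
    (hinter : S₁ ∩ S₂ = {v}) (hI : InvP S₁ S₂ v hv₁ t h) :
    h ∉ t '' sideA S₁ S₂ v ∧ h ∉ t '' sideB S₁ S₂ v := by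
  rcases hI with ⟨rfl, hA, hB⟩ | ⟨hh, hA, hB⟩ | ⟨hh, hB, hA⟩
  · rw [hA, hB]
    exact ⟨vtxW_not_sideA S₁ S₂ v hv₁, vtxW_not_sideB S₁ S₂ v hv₁⟩
  · rw [hA, hB]
    constructor
    · rintro (h' | ⟨_, h'⟩)
      · exact sideA_ne_vtxW S₁ S₂ v hv₁ hh h'
      · exact h' rfl
    · intro h'; exact sideA_disj S₁ S₂ v hinter hh h'
  · rw [hA, hB]
    constructor
    · intro h'; exact sideA_disj S₁ S₂ v hinter h' hh
    · rintro (h' | ⟨_, h'⟩)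
      · exact sideB_ne_vtxW S₁ S₂ v hv₁ hh h'
      · exact h' rfl

end Setting

lemma collapse_coe [DecidableEq V] {S T : Set V} {u₁ w₁ : ↥S} {uT wT : ↥T} {a : ↥S} {b : ↥T}
    (hu : (u₁ : V) = (uT : V)) (hw : (w₁ : V) = (wT : V)) (hab : (a : V) = (b : V)) :
    ((collapse u₁ w₁ a : ↥S) : V) = ((collapse uT wT b : ↥T) : V) := by
  by_cases h : a = u₁
  · have hb : b = uT := Subtype.ext (by rw [← hab, h, hu])
    simp [collapse, h, hb, hw]
  · have hb : b ≠ uT := fun hbe => h (Subtype.ext (by rw [hab, hbe, ← hu]))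
    simp [collapse, h, hb, hab]

section Transition
variable [Fintype V] [DecidableEq V]

lemma transition (Γ : SimpleGraph V) (S₁ S₂ : Set V) (v : V)
    (hv₁ : v ∈ S₁) (hv₂ : v ∈ S₂) (hinter : S₁ ∩ S₂ = {v})
    (hnoedge : ∀ x ∈ S₁ \ {v}, ∀ y ∈ S₂ \ {v}, ¬ Γ.Adj x y)
    {t : Function.End ↥(S₁ ∪ S₂)} {h u w : ↥(S₁ ∪ S₂)}
    {t₁ : Function.End ↥S₁} {t₂ : Function.End ↥S₂}
    (hInv : InvP S₁ S₂ v hv₁ t h)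
    (ht₁ : t₁ = 1 ∨ t₁ ∈ flowSemigroup (Γ.induce S₁).Adj)
    (hrel₁ : Rel₁ S₁ S₂ v t t₁)
    (ht₂ : t₂ = 1 ∨ t₂ ∈ flowSemigroup (Γ.induce S₂).Adj)
    (hrel₂ : Rel₂ S₁ S₂ v t t₂)
    (hadj : (Γ.induce (S₁ ∪ S₂)).Adj u w)
    (hinj : Set.InjOn (collapse u w * t) {x : ↥(S₁ ∪ S₂) | x ≠ vtxW S₁ S₂ v hv₁}) :
    Good S₁ S₂ v hv₁ Γ (collapse u w * t) := by
  have hΓuw : Γ.Adj ↑u ↑w := hadj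
  have huw : u ≠ w := hadj.ne
  have hAB := InvP.image_union S₁ S₂ v hv₁ hinter hInv
  have hnh := InvP.hole_not_mem S₁ S₂ v hv₁ hinter hInv
  have hsub : sideA S₁ S₂ v ∪ sideB S₁ S₂ v ⊆ {x : ↥(S₁ ∪ S₂) | x ≠ vtxW S₁ S₂ v hv₁} := by
    rintro z (hz | hz)
    · exact sideA_ne_vtxW S₁ S₂ v hv₁ hz
    · exact sideB_ne_vtxW S₁ S₂ v hv₁ hz
  have himage : ∀ X : Set ↥(S₁ ∪ S₂), (collapse u w * t) '' X = collapse u w '' (t '' X) :=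
    fun X => Set.image_comp _ _ _
  by_cases huh : u = h
  · -- no-op case : u is the hole
    subst huh
    have key : ∀ x ∈ sideA S₁ S₂ v ∪ sideB S₁ S₂ v, (collapse u w * t) x = t x := by
      intro x hx
      have htx : t x ∈ ({u}ᶜ : Set _) := by rw [← hAB]; exact Set.mem_image_of_mem t hx
      exact collapse_apply_ne htx
    have himA : (collapse u w * t) '' sideA S₁ S₂ v = t '' sideA S₁ S₂ v :=
      Set.image_congr (fun x hx => key x (Or.inl hx))
    have himB : (collapse u w * t) '' sideB S₁ S₂ v = t '' sideB S₁ S₂ v :=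
      Set.image_congr (fun x hx => key x (Or.inr hx))
    refine ⟨⟨u, ?_⟩, ⟨t₁, ht₁, ?_⟩, ⟨t₂, ht₂, ?_⟩⟩
    · rcases hInv with ⟨h1, h2, h3⟩ | ⟨h1, h2, h3⟩ | ⟨h1, h2, h3⟩
      · exact Or.inl ⟨h1, himA.trans h2, himB.trans h3⟩
      · exact Or.inr (Or.inl ⟨h1, himA.trans h2, himB.trans h3⟩)
      · exact Or.inr (Or.inr ⟨h1, himB.trans h2, himA.trans h3⟩)
    · intro x hx
      rw [hrel₁ x hx]
      exact congrArg Subtype.val (key _ (Or.inl ⟨x.2, hx⟩)).symm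
    · intro x hx
      rw [hrel₂ x hx]
      exact congrArg Subtype.val (key _ (Or.inr ⟨x.2, hx⟩)).symm
  · -- real move: w must be the hole
    have hwh : w = h := by
      by_contra hwh
      have hu' : u ∈ ({h}ᶜ : Set _) := huh
      have hw' : w ∈ ({h}ᶜ : Set _) := hwh
      rw [← hAB] at hu' hw'
      obtain ⟨x, hx, hxu⟩ := hu'
      obtain ⟨y, hy, hyw⟩ := hw'
      have hxy : x ≠ y := fun e => huw (by rw [← hxu, ← hyw, e])
      apply hxy
      apply hinj (hsub hx) (hsub hy)
      show collapse u w (t x) = collapse u w (t y)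
      rw [hxu, hyw, collapse_apply_self, collapse_apply_ne huw.symm]
    subst hwh
    rcases mem_cases S₁ S₂ v hv₁ w with hh | hh | hh
    · -- hole w ∈ A
      obtain ⟨hA2, hB2⟩ : t '' sideA S₁ S₂ v =
          insert (vtxW S₁ S₂ v hv₁) (sideA S₁ S₂ v \ {w}) ∧
          t '' sideB S₁ S₂ v = sideB S₁ S₂ v := by
        rcases hInv with ⟨he, _, _⟩ | ⟨_, h2, h3⟩ | ⟨hB3, _, _⟩
        · exact absurd he (sideA_ne_vtxW S₁ S₂ v hv₁ hh)
        · exact ⟨h2, h3⟩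
        · exact (sideA_disj S₁ S₂ v hinter hh hB3).elim
      rcases mem_cases S₁ S₂ v hv₁ u with huA | huB | huv
      · -- u ∈ A : move within side A
        have himA : (collapse u w * t) '' sideA S₁ S₂ v =
            insert (vtxW S₁ S₂ v hv₁) (sideA S₁ S₂ v \ {u}) := by
          rw [himage, hA2, collapse_image_of_mem (X := insert (vtxW S₁ S₂ v hv₁) (sideA S₁ S₂ v \ {w})) (Or.inr ⟨huA, by simpa using huh⟩)]
          exact shuffle1 hh (sideA_ne_vtxW S₁ S₂ v hv₁ huA) huh
        have himB : (collapse u w * t) '' sideB S₁ S₂ v = sideB S₁ S₂ v := by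
          rw [himage, hB2, collapse_image_of_not_mem
            (fun hB => sideA_disj S₁ S₂ v hinter huA hB)]
        refine ⟨⟨u, Or.inr (Or.inl ⟨huA, himA, himB⟩)⟩, ?_, ?_⟩
        · refine ⟨collapse (⟨↑u, huA.1⟩ : ↥S₁) (⟨↑w, hh.1⟩ : ↥S₁) * t₁, ?_, ?_⟩
          · have hadj1 : (Γ.induce S₁).Adj ⟨↑u, huA.1⟩ ⟨↑w, hh.1⟩ := hΓuw
            have hc : collapse (⟨↑u, huA.1⟩ : ↥S₁) (⟨↑w, hh.1⟩ : ↥S₁) ∈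
                flowSemigroup (Γ.induce S₁).Adj :=
              Subsemigroup.subset_closure ⟨_, _, hadj1, rfl⟩
            rcases ht₁ with rfl | ht₁m
            · exact Or.inr (by rw [mul_one]; exact hc)
            · exact Or.inr (mul_mem hc ht₁m)
          · intro x hx
            exact collapse_coe rfl rfl (hrel₁ x hx)
        · refine ⟨t₂, ht₂, ?_⟩
          intro x hx
          rw [hrel₂ x hx]
          have hm : t ⟨(x : V), Set.mem_union_right S₁ x.2⟩ ∈ sideB S₁ S₂ v := by
            rw [← hB2]; exact Set.mem_image_of_mem t ⟨x.2, hx⟩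
          exact congrArg Subtype.val (collapse_apply_ne
            (fun e => sideA_disj S₁ S₂ v hinter huA (by rw [← e]; exact hm))).symm
      · -- u ∈ B : impossible, no edges between the sides
        exact absurd hΓuw.symm
          (hnoedge ↑w ⟨hh.1, by simpa using hh.2⟩ ↑u ⟨huB.1, by simpa using huB.2⟩)
      · -- u = vtxW : token returns from v into side A, hole back at v
        have himA : (collapse u w * t) '' sideA S₁ S₂ v = sideA S₁ S₂ v := by
          rw [himage, hA2, huv, collapse_image_of_mem (X := insert (vtxW S₁ S₂ v hv₁) (sideA S₁ S₂ v \ {w})) (Or.inl rfl)]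
          exact shuffle2 hh (vtxW_not_sideA S₁ S₂ v hv₁)
        have himB : (collapse u w * t) '' sideB S₁ S₂ v = sideB S₁ S₂ v := by
          rw [himage, hB2, huv,
            collapse_image_of_not_mem (vtxW_not_sideB S₁ S₂ v hv₁)]
        refine ⟨⟨vtxW S₁ S₂ v hv₁, Or.inl ⟨rfl, himA, himB⟩⟩, ?_, ?_⟩
        · refine ⟨collapse (⟨v, hv₁⟩ : ↥S₁) (⟨↑w, hh.1⟩ : ↥S₁) * t₁, ?_, ?_⟩
          · have hΓvw : Γ.Adj v ↑w := by rw [huv] at hΓuw; exact hΓuw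
            have hadj1 : (Γ.induce S₁).Adj ⟨v, hv₁⟩ ⟨↑w, hh.1⟩ := hΓvw
            have hc : collapse (⟨v, hv₁⟩ : ↥S₁) (⟨↑w, hh.1⟩ : ↥S₁) ∈
                flowSemigroup (Γ.induce S₁).Adj :=
              Subsemigroup.subset_closure ⟨_, _, hadj1, rfl⟩
            rcases ht₁ with rfl | ht₁m
            · exact Or.inr (by rw [mul_one]; exact hc)
            · exact Or.inr (mul_mem hc ht₁m)
          · intro x hx
            exact collapse_coe (by rw [huv]; rfl) rfl (hrel₁ x hx)
        · refine ⟨t₂, ht₂, ?_⟩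
          intro x hx
          rw [hrel₂ x hx]
          have hm : t ⟨(x : V), Set.mem_union_right S₁ x.2⟩ ∈ sideB S₁ S₂ v := by
            rw [← hB2]; exact Set.mem_image_of_mem t ⟨x.2, hx⟩
          refine congrArg Subtype.val (collapse_apply_ne ?_).symm
          rw [huv]
          exact sideB_ne_vtxW S₁ S₂ v hv₁ hm
    · -- hole w ∈ B
      obtain ⟨hB2, hA2⟩ : t '' sideB S₁ S₂ v =
          insert (vtxW S₁ S₂ v hv₁) (sideB S₁ S₂ v \ {w}) ∧
          t '' sideA S₁ S₂ v = sideA S₁ S₂ v := by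
        rcases hInv with ⟨he, _, _⟩ | ⟨hA3, _, _⟩ | ⟨_, h2, h3⟩
        · exact absurd he (sideB_ne_vtxW S₁ S₂ v hv₁ hh)
        · exact (sideA_disj S₁ S₂ v hinter hA3 hh).elim
        · exact ⟨h2, h3⟩
      rcases mem_cases S₁ S₂ v hv₁ u with huA | huB | huv
      · exact absurd hΓuw
          (hnoedge ↑u ⟨huA.1, by simpa using huA.2⟩ ↑w ⟨hh.1, by simpa using hh.2⟩)
      · -- u ∈ B : move within side B
        have himB : (collapse u w * t) '' sideB S₁ S₂ v =
            insert (vtxW S₁ S₂ v hv₁) (sideB S₁ S₂ v \ {u}) := by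
          rw [himage, hB2, collapse_image_of_mem (X := insert (vtxW S₁ S₂ v hv₁) (sideB S₁ S₂ v \ {w})) (Or.inr ⟨huB, by simpa using huh⟩)]
          exact shuffle1 hh (sideB_ne_vtxW S₁ S₂ v hv₁ huB) huh
        have himA : (collapse u w * t) '' sideA S₁ S₂ v = sideA S₁ S₂ v := by
          rw [himage, hA2, collapse_image_of_not_mem
            (fun hA => sideA_disj S₁ S₂ v hinter hA huB)]
        refine ⟨⟨u, Or.inr (Or.inr ⟨huB, himB, himA⟩)⟩, ?_, ?_⟩
        · refine ⟨t₁, ht₁, ?_⟩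
          intro x hx
          rw [hrel₁ x hx]
          have hm : t ⟨(x : V), Set.mem_union_left S₂ x.2⟩ ∈ sideA S₁ S₂ v := by
            rw [← hA2]; exact Set.mem_image_of_mem t ⟨x.2, hx⟩
          exact congrArg Subtype.val (collapse_apply_ne
            (fun e => sideA_disj S₁ S₂ v hinter (by rw [← e]; exact hm) huB)).symm
        · refine ⟨collapse (⟨↑u, huB.1⟩ : ↥S₂) (⟨↑w, hh.1⟩ : ↥S₂) * t₂, ?_, ?_⟩
          · have hadj2 : (Γ.induce S₂).Adj ⟨↑u, huB.1⟩ ⟨↑w, hh.1⟩ := hΓuw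
            have hc : collapse (⟨↑u, huB.1⟩ : ↥S₂) (⟨↑w, hh.1⟩ : ↥S₂) ∈
                flowSemigroup (Γ.induce S₂).Adj :=
              Subsemigroup.subset_closure ⟨_, _, hadj2, rfl⟩
            rcases ht₂ with rfl | ht₂m
            · exact Or.inr (by rw [mul_one]; exact hc)
            · exact Or.inr (mul_mem hc ht₂m)
          · intro x hx
            exact collapse_coe rfl rfl (hrel₂ x hx)
      · -- u = vtxW : token returns from v into side B
        have himB : (collapse u w * t) '' sideB S₁ S₂ v = sideB S₁ S₂ v := by
          rw [himage, hB2, huv, collapse_image_of_mem (X := insert (vtxW S₁ S₂ v hv₁) (sideB S₁ S₂ v \ {w})) (Or.inl rfl)]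
          exact shuffle2 hh (vtxW_not_sideB S₁ S₂ v hv₁)
        have himA : (collapse u w * t) '' sideA S₁ S₂ v = sideA S₁ S₂ v := by
          rw [himage, hA2, huv,
            collapse_image_of_not_mem (vtxW_not_sideA S₁ S₂ v hv₁)]
        refine ⟨⟨vtxW S₁ S₂ v hv₁, Or.inl ⟨rfl, himA, himB⟩⟩, ?_, ?_⟩
        · refine ⟨t₁, ht₁, ?_⟩
          intro x hx
          rw [hrel₁ x hx]
          have hm : t ⟨(x : V), Set.mem_union_left S₂ x.2⟩ ∈ sideA S₁ S₂ v := by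
            rw [← hA2]; exact Set.mem_image_of_mem t ⟨x.2, hx⟩
          refine congrArg Subtype.val (collapse_apply_ne ?_).symm
          rw [huv]
          exact sideA_ne_vtxW S₁ S₂ v hv₁ hm
        · refine ⟨collapse (⟨v, hv₂⟩ : ↥S₂) (⟨↑w, hh.1⟩ : ↥S₂) * t₂, ?_, ?_⟩
          · have hΓvw : Γ.Adj v ↑w := by rw [huv] at hΓuw; exact hΓuw
            have hadj2 : (Γ.induce S₂).Adj ⟨v, hv₂⟩ ⟨↑w, hh.1⟩ := hΓvw
            have hc : collapse (⟨v, hv₂⟩ : ↥S₂) (⟨↑w, hh.1⟩ : ↥S₂) ∈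
                flowSemigroup (Γ.induce S₂).Adj :=
              Subsemigroup.subset_closure ⟨_, _, hadj2, rfl⟩
            rcases ht₂ with rfl | ht₂m
            · exact Or.inr (by rw [mul_one]; exact hc)
            · exact Or.inr (mul_mem hc ht₂m)
          · intro x hx
            exact collapse_coe (by rw [huv]; rfl) rfl (hrel₂ x hx)
    · -- hole w = vtxW
      obtain ⟨hA2, hB2⟩ : t '' sideA S₁ S₂ v = sideA S₁ S₂ v ∧
          t '' sideB S₁ S₂ v = sideB S₁ S₂ v := by
        rcases hInv with ⟨_, h2, h3⟩ | ⟨hA3, _, _⟩ | ⟨hB3, _, _⟩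
        · exact ⟨h2, h3⟩
        · exact absurd (hh ▸ hA3) (vtxW_not_sideA S₁ S₂ v hv₁)
        · exact absurd (hh ▸ hB3) (vtxW_not_sideB S₁ S₂ v hv₁)
      rcases mem_cases S₁ S₂ v hv₁ u with huA | huB | huv
      · -- u ∈ A : token enters v from side A, hole moves to u ∈ A
        have himA : (collapse u w * t) '' sideA S₁ S₂ v =
            insert (vtxW S₁ S₂ v hv₁) (sideA S₁ S₂ v \ {u}) := by
          rw [himage, hA2, collapse_image_of_mem huA, hh]
        have himB : (collapse u w * t) '' sideB S₁ S₂ v = sideB S₁ S₂ v := by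
          rw [himage, hB2, collapse_image_of_not_mem
            (fun hB => sideA_disj S₁ S₂ v hinter huA hB)]
        refine ⟨⟨u, Or.inr (Or.inl ⟨huA, himA, himB⟩)⟩, ?_, ?_⟩
        · refine ⟨collapse (⟨↑u, huA.1⟩ : ↥S₁) (⟨v, hv₁⟩ : ↥S₁) * t₁, ?_, ?_⟩
          · have hΓuv : Γ.Adj ↑u v := by rw [hh] at hΓuw; exact hΓuw
            have hadj1 : (Γ.induce S₁).Adj ⟨↑u, huA.1⟩ ⟨v, hv₁⟩ := hΓuv
            have hc : collapse (⟨↑u, huA.1⟩ : ↥S₁) (⟨v, hv₁⟩ : ↥S₁) ∈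
                flowSemigroup (Γ.induce S₁).Adj :=
              Subsemigroup.subset_closure ⟨_, _, hadj1, rfl⟩
            rcases ht₁ with rfl | ht₁m
            · exact Or.inr (by rw [mul_one]; exact hc)
            · exact Or.inr (mul_mem hc ht₁m)
          · intro x hx
            exact collapse_coe rfl (by rw [hh]; rfl) (hrel₁ x hx)
        · refine ⟨t₂, ht₂, ?_⟩
          intro x hx
          rw [hrel₂ x hx]
          have hm : t ⟨(x : V), Set.mem_union_right S₁ x.2⟩ ∈ sideB S₁ S₂ v := by
            rw [← hB2]; exact Set.mem_image_of_mem t ⟨x.2, hx⟩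
          exact congrArg Subtype.val (collapse_apply_ne
            (fun e => sideA_disj S₁ S₂ v hinter huA (by rw [← e]; exact hm))).symm
      · -- u ∈ B
        have himB : (collapse u w * t) '' sideB S₁ S₂ v =
            insert (vtxW S₁ S₂ v hv₁) (sideB S₁ S₂ v \ {u}) := by
          rw [himage, hB2, collapse_image_of_mem huB, hh]
        have himA : (collapse u w * t) '' sideA S₁ S₂ v = sideA S₁ S₂ v := by
          rw [himage, hA2, collapse_image_of_not_mem
            (fun hA => sideA_disj S₁ S₂ v hinter hA huB)]
        refine ⟨⟨u, Or.inr (Or.inr ⟨huB, himB, himA⟩)⟩, ?_, ?_⟩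
        · refine ⟨t₁, ht₁, ?_⟩
          intro x hx
          rw [hrel₁ x hx]
          have hm : t ⟨(x : V), Set.mem_union_left S₂ x.2⟩ ∈ sideA S₁ S₂ v := by
            rw [← hA2]; exact Set.mem_image_of_mem t ⟨x.2, hx⟩
          exact congrArg Subtype.val (collapse_apply_ne
            (fun e => sideA_disj S₁ S₂ v hinter (by rw [← e]; exact hm) huB)).symm
        · refine ⟨collapse (⟨↑u, huB.1⟩ : ↥S₂) (⟨v, hv₂⟩ : ↥S₂) * t₂, ?_, ?_⟩
          · have hΓuv : Γ.Adj ↑u v := by rw [hh] at hΓuw; exact hΓuw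
            have hadj2 : (Γ.induce S₂).Adj ⟨↑u, huB.1⟩ ⟨v, hv₂⟩ := hΓuv
            have hc : collapse (⟨↑u, huB.1⟩ : ↥S₂) (⟨v, hv₂⟩ : ↥S₂) ∈
                flowSemigroup (Γ.induce S₂).Adj :=
              Subsemigroup.subset_closure ⟨_, _, hadj2, rfl⟩
            rcases ht₂ with rfl | ht₂m
            · exact Or.inr (by rw [mul_one]; exact hc)
            · exact Or.inr (mul_mem hc ht₂m)
          · intro x hx
            exact collapse_coe rfl (by rw [hh]; rfl) (hrel₂ x hx)
      · exact absurd (huv.trans hh.symm) huh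
end Transition

section MainLemma
variable [Fintype V] [DecidableEq V]

lemma good_of_flow (Γ : SimpleGraph V) (S₁ S₂ : Set V) (v : V)
    (hv₁ : v ∈ S₁) (hv₂ : v ∈ S₂) (hinter : S₁ ∩ S₂ = {v})
    (hnoedge : ∀ x ∈ S₁ \ {v}, ∀ y ∈ S₂ \ {v}, ¬ Γ.Adj x y)
    {s : Function.End ↥(S₁ ∪ S₂)}
    (hs : s ∈ flowSemigroup (Γ.induce (S₁ ∪ S₂)).Adj)
    (hinj : Set.InjOn s {x : ↥(S₁ ∪ S₂) | x ≠ vtxW S₁ S₂ v hv₁}) :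
    Good S₁ S₂ v hv₁ Γ s := by
  suffices H : ∀ l : List (Function.End ↥(S₁ ∪ S₂)), l ≠ [] →
      (∀ f ∈ l, ∃ u w, (Γ.induce (S₁ ∪ S₂)).Adj u w ∧ f = collapse u w) →
      Set.InjOn l.prod {x : ↥(S₁ ∪ S₂) | x ≠ vtxW S₁ S₂ v hv₁} →
      Good S₁ S₂ v hv₁ Γ l.prod by
    obtain ⟨l, hne, hg, rfl⟩ := flow_word hs
    exact H l hne hg hinj
  intro l
  induction l with
  | nil => intro h; exact absurd rfl h
  | cons e l ih =>
    intro _ hg hinje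
    rw [List.prod_cons] at hinje ⊢
    obtain ⟨u, w, hadj, he⟩ := hg e List.mem_cons_self
    subst he
    rcases eq_or_ne l [] with rfl | hl
    · rw [List.prod_nil] at hinje ⊢
      have hone : ∀ X : Set ↥(S₁ ∪ S₂), (1 : Function.End ↥(S₁ ∪ S₂)) '' X = X := by
        intro X
        rw [show (1 : Function.End ↥(S₁ ∪ S₂)) = id from rfl, Set.image_id]
      exact transition Γ S₁ S₂ v hv₁ hv₂ hinter hnoedge
        (Or.inl ⟨rfl, hone _, hone _⟩) (Or.inl rfl) (fun x hx => rfl)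
        (Or.inl rfl) (fun x hx => rfl) hadj hinje
    · have hinjl : Set.InjOn l.prod {x : ↥(S₁ ∪ S₂) | x ≠ vtxW S₁ S₂ v hv₁} := by
        intro x hx y hy hxy
        exact hinje hx hy (by show collapse u w (l.prod x) = collapse u w (l.prod y); rw [hxy])
      obtain ⟨⟨h, hInv⟩, ⟨t₁, ht₁, hrel₁⟩, ⟨t₂, ht₂, hrel₂⟩⟩ :=
        ih hl (fun f hf => hg f (List.mem_cons_of_mem _ hf)) hinjl
      exact transition Γ S₁ S₂ v hv₁ hv₂ hinter hnoedge
        hInv ht₁ hrel₁ ht₂ hrel₂ hadj hinje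

end MainLemma

section Assembly
variable [Fintype V] [DecidableEq V]

open Classical in
/-- The canonical identification of `(S₁ ∪ S₂) \ {v}` with `(S₁ \ {v}) ⊕ (S₂ \ {v})`. -/
noncomputable def theEquiv (S₁ S₂ : Set V) (v : V) (hv₁ : v ∈ S₁) (hv₂ : v ∈ S₂)
    (hinter : S₁ ∩ S₂ = {v}) :
    {x : ↥(S₁ ∪ S₂) // x ∉ ({⟨v, Set.mem_union_left S₂ hv₁⟩} : Set ↥(S₁ ∪ S₂))} ≃
      ({x : ↥S₁ // x ∉ ({⟨v, hv₁⟩} : Set ↥S₁)} ⊕ {x : ↥S₂ // x ∉ ({⟨v, hv₂⟩} : Set ↥S₂)}) where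
  toFun x :=
    if h1 : ((x : ↥(S₁ ∪ S₂)) : V) ∈ S₁ then
      Sum.inl ⟨⟨↑↑x, h1⟩, fun hm => x.2 (by
        have : ((x : ↥(S₁ ∪ S₂)) : V) = v := congrArg Subtype.val (Set.mem_singleton_iff.mp hm)
        exact Subtype.ext this)⟩
    else
      Sum.inr ⟨⟨↑↑x, (x : ↥(S₁ ∪ S₂)).2.resolve_left h1⟩, fun hm => x.2 (by
        have : ((x : ↥(S₁ ∪ S₂)) : V) = v := congrArg Subtype.val (Set.mem_singleton_iff.mp hm)
        exact Subtype.ext this)⟩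
  invFun := Sum.elim
    (fun y => ⟨⟨↑↑y, Set.mem_union_left S₂ (y : ↥S₁).2⟩, fun hm => y.2 (by
      have : ((y : ↥S₁) : V) = v := congrArg Subtype.val (Set.mem_singleton_iff.mp hm)
      exact Subtype.ext this)⟩)
    (fun y => ⟨⟨↑↑y, Set.mem_union_right S₁ (y : ↥S₂).2⟩, fun hm => y.2 (by
      have : ((y : ↥S₂) : V) = v := congrArg Subtype.val (Set.mem_singleton_iff.mp hm)
      exact Subtype.ext this)⟩)
  left_inv x := by
    dsimp only
    by_cases h1 : ((x : ↥(S₁ ∪ S₂)) : V) ∈ S₁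
    · rw [dif_pos h1]
      exact Subtype.ext (Subtype.ext rfl)
    · rw [dif_neg h1]
      exact Subtype.ext (Subtype.ext rfl)
  right_inv y := by
    rcases y with y | y
    · have h1 : (((⟨⟨↑↑y, Set.mem_union_left S₂ (y : ↥S₁).2⟩, fun hm => y.2 (by
        have : ((y : ↥S₁) : V) = v := congrArg Subtype.val (Set.mem_singleton_iff.mp hm)
        exact Subtype.ext this)⟩ : {x : ↥(S₁ ∪ S₂) //
          x ∉ ({⟨v, Set.mem_union_left S₂ hv₁⟩} : Set ↥(S₁ ∪ S₂))}) : ↥(S₁ ∪ S₂)) : V) ∈ S₁ :=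
        (y : ↥S₁).2
      simp only [Sum.elim_inl]
      exact dif_pos ((y : ↥S₁).2)
    · have h1 : ¬ ((((⟨⟨↑↑y, Set.mem_union_right S₁ (y : ↥S₂).2⟩, fun hm => y.2 (by
        have : ((y : ↥S₂) : V) = v := congrArg Subtype.val (Set.mem_singleton_iff.mp hm)
        exact Subtype.ext this)⟩ : {x : ↥(S₁ ∪ S₂) //
          x ∉ ({⟨v, Set.mem_union_left S₂ hv₁⟩} : Set ↥(S₁ ∪ S₂))}) : ↥(S₁ ∪ S₂)) : V) ∈ S₁) := by
        intro h1
        have hm : ((y : ↥S₂) : V) ∈ S₁ ∩ S₂ := ⟨h1, (y : ↥S₂).2⟩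
        rw [hinter] at hm
        exact y.2 (Subtype.ext hm)
      simp only [Sum.elim_inr]
      exact dif_neg (fun h2 => h1 h2)

lemma theEquiv_apply_of_mem (S₁ S₂ : Set V) (v : V) (hv₁ : v ∈ S₁) (hv₂ : v ∈ S₂)
    (hinter : S₁ ∩ S₂ = {v})
    {x : {x : ↥(S₁ ∪ S₂) // x ∉ ({⟨v, Set.mem_union_left S₂ hv₁⟩} : Set ↥(S₁ ∪ S₂))}}
    {y : {x : ↥S₁ // x ∉ ({⟨v, hv₁⟩} : Set ↥S₁)}}
    (hxy : ((y : ↥S₁) : V) = ((x : ↥(S₁ ∪ S₂)) : V)) :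
    theEquiv S₁ S₂ v hv₁ hv₂ hinter x = Sum.inl y := by
  have h1 : ((x : ↥(S₁ ∪ S₂)) : V) ∈ S₁ := hxy ▸ (y : ↥S₁).2
  simp only [theEquiv, Equiv.coe_fn_mk]
  rw [dif_pos h1]
  exact congrArg Sum.inl (Subtype.ext (Subtype.ext hxy.symm))

lemma theEquiv_apply_of_mem' (S₁ S₂ : Set V) (v : V) (hv₁ : v ∈ S₁) (hv₂ : v ∈ S₂)
    (hinter : S₁ ∩ S₂ = {v})
    {x : {x : ↥(S₁ ∪ S₂) // x ∉ ({⟨v, Set.mem_union_left S₂ hv₁⟩} : Set ↥(S₁ ∪ S₂))}}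
    {y : {x : ↥S₂ // x ∉ ({⟨v, hv₂⟩} : Set ↥S₂)}}
    (hxy : ((y : ↥S₂) : V) = ((x : ↥(S₁ ∪ S₂)) : V)) :
    theEquiv S₁ S₂ v hv₁ hv₂ hinter x = Sum.inr y := by
  have h1 : ¬ ((x : ↥(S₁ ∪ S₂)) : V) ∈ S₁ := by
    intro h1
    have hm : ((y : ↥S₂) : V) ∈ S₁ ∩ S₂ := ⟨hxy ▸ h1, (y : ↥S₂).2⟩
    rw [hinter] at hm
    exact y.2 (Subtype.ext hm)
  simp only [theEquiv, Equiv.coe_fn_mk]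
  rw [dif_neg h1]
  exact congrArg Sum.inr (Subtype.ext (Subtype.ext hxy.symm))

lemma theEquiv_symm_inl (S₁ S₂ : Set V) (v : V) (hv₁ : v ∈ S₁) (hv₂ : v ∈ S₂)
    (hinter : S₁ ∩ S₂ = {v}) (y : {x : ↥S₁ // x ∉ ({⟨v, hv₁⟩} : Set ↥S₁)}) :
    ((((theEquiv S₁ S₂ v hv₁ hv₂ hinter).symm (Sum.inl y) : ↥(S₁ ∪ S₂))) : V) = ((y : ↥S₁) : V) :=
  rfl

lemma theEquiv_symm_inr (S₁ S₂ : Set V) (v : V) (hv₁ : v ∈ S₁) (hv₂ : v ∈ S₂)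
    (hinter : S₁ ∩ S₂ = {v}) (y : {x : ↥S₂ // x ∉ ({⟨v, hv₂⟩} : Set ↥S₂)}) :
    ((((theEquiv S₁ S₂ v hv₁ hv₂ hinter).symm (Sum.inr y) : ↥(S₁ ∪ S₂))) : V) = ((y : ↥S₂) : V) :=
  rfl

/-- `Equiv.permCongr` as a multiplicative equivalence. -/
def permCongrMul {α β : Type*} (e : α ≃ β) : Equiv.Perm α ≃* Equiv.Perm β :=
  { Equiv.permCongr e with
    map_mul' := fun a b => by
      ext x
      simp [Equiv.permCongr_apply] }

noncomputable def jmap (S₁ S₂ : Set V) (v : V) (hv₁ : v ∈ S₁) (hv₂ : v ∈ S₂)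
    (hinter : S₁ ∩ S₂ = {v}) :
    Equiv.Perm {x : ↥S₁ // x ∉ ({⟨v, hv₁⟩} : Set ↥S₁)} ×
      Equiv.Perm {x : ↥S₂ // x ∉ ({⟨v, hv₂⟩} : Set ↥S₂)} →*
    Equiv.Perm {x : ↥(S₁ ∪ S₂) // x ∉ ({⟨v, Set.mem_union_left S₂ hv₁⟩} : Set ↥(S₁ ∪ S₂))} :=
  (permCongrMul (theEquiv S₁ S₂ v hv₁ hv₂ hinter).symm).toMonoidHom.comp
    (Equiv.Perm.sumCongrHom _ _)

lemma jmap_injective (S₁ S₂ : Set V) (v : V) (hv₁ : v ∈ S₁) (hv₂ : v ∈ S₂)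
    (hinter : S₁ ∩ S₂ = {v}) : Function.Injective (jmap S₁ S₂ v hv₁ hv₂ hinter) :=
  (permCongrMul (theEquiv S₁ S₂ v hv₁ hv₂ hinter).symm).injective.comp
    (Equiv.Perm.sumCongrHom_injective)

lemma jmap_apply (S₁ S₂ : Set V) (v : V) (hv₁ : v ∈ S₁) (hv₂ : v ∈ S₂)
    (hinter : S₁ ∩ S₂ = {v}) (pq) (x) :
    jmap S₁ S₂ v hv₁ hv₂ hinter pq x =
      (theEquiv S₁ S₂ v hv₁ hv₂ hinter).symm
        (Sum.map pq.1 pq.2 (theEquiv S₁ S₂ v hv₁ hv₂ hinter x)) := by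
  simp [jmap, permCongrMul, Equiv.permCongr_apply, Equiv.Perm.sumCongrHom]

lemma theEquiv_jmap (S₁ S₂ : Set V) (v : V) (hv₁ : v ∈ S₁) (hv₂ : v ∈ S₂)
    (hinter : S₁ ∩ S₂ = {v}) (pq) (x) :
    theEquiv S₁ S₂ v hv₁ hv₂ hinter (jmap S₁ S₂ v hv₁ hv₂ hinter pq x) =
      Sum.map pq.1 pq.2 (theEquiv S₁ S₂ v hv₁ hv₂ hinter x) := by
  rw [jmap_apply, Equiv.apply_symm_apply]

end Assembly

section Ext
variable [Fintype V] [DecidableEq V]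

open Classical in
noncomputable def extEnd₁ (S₁ S₂ : Set V) (f : Function.End ↥S₁) : Function.End ↥(S₁ ∪ S₂) :=
  fun x => if h : (x : V) ∈ S₁ then
    ⟨↑(f ⟨↑x, h⟩), Set.mem_union_left S₂ (f ⟨↑x, h⟩).2⟩ else x

open Classical in
noncomputable def extEnd₂ (S₁ S₂ : Set V) (f : Function.End ↥S₂) : Function.End ↥(S₁ ∪ S₂) :=
  fun x => if h : (x : V) ∈ S₂ then
    ⟨↑(f ⟨↑x, h⟩), Set.mem_union_right S₁ (f ⟨↑x, h⟩).2⟩ else x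

lemma extEnd₁_apply_mem (S₁ S₂ : Set V) (f : Function.End ↥S₁) {x : ↥(S₁ ∪ S₂)}
    (h : (x : V) ∈ S₁) :
    extEnd₁ S₁ S₂ f x = ⟨↑(f ⟨↑x, h⟩), Set.mem_union_left S₂ (f ⟨↑x, h⟩).2⟩ :=
  dif_pos h

lemma extEnd₁_apply_not_mem (S₁ S₂ : Set V) (f : Function.End ↥S₁) {x : ↥(S₁ ∪ S₂)}
    (h : ¬ (x : V) ∈ S₁) : extEnd₁ S₁ S₂ f x = x :=
  dif_neg h

lemma extEnd₂_apply_mem (S₁ S₂ : Set V) (f : Function.End ↥S₂) {x : ↥(S₁ ∪ S₂)}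
    (h : (x : V) ∈ S₂) :
    extEnd₂ S₁ S₂ f x = ⟨↑(f ⟨↑x, h⟩), Set.mem_union_right S₁ (f ⟨↑x, h⟩).2⟩ :=
  dif_pos h

lemma extEnd₂_apply_not_mem (S₁ S₂ : Set V) (f : Function.End ↥S₂) {x : ↥(S₁ ∪ S₂)}
    (h : ¬ (x : V) ∈ S₂) : extEnd₂ S₁ S₂ f x = x :=
  dif_neg h

lemma extEnd₁_mul (S₁ S₂ : Set V) (f g : Function.End ↥S₁) :
    extEnd₁ S₁ S₂ (f * g) = extEnd₁ S₁ S₂ f * extEnd₁ S₁ S₂ g := by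
  funext x
  show extEnd₁ S₁ S₂ (f * g) x = extEnd₁ S₁ S₂ f (extEnd₁ S₁ S₂ g x)
  by_cases h : (x : V) ∈ S₁
  · rw [extEnd₁_apply_mem S₁ S₂ (f * g) h, extEnd₁_apply_mem S₁ S₂ g h,
      extEnd₁_apply_mem S₁ S₂ f (g ⟨↑x, h⟩).2]
    exact Subtype.ext rfl
  · rw [extEnd₁_apply_not_mem S₁ S₂ (f * g) h, extEnd₁_apply_not_mem S₁ S₂ g h,
      extEnd₁_apply_not_mem S₁ S₂ f h]

lemma extEnd₂_mul (S₁ S₂ : Set V) (f g : Function.End ↥S₂) :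
    extEnd₂ S₁ S₂ (f * g) = extEnd₂ S₁ S₂ f * extEnd₂ S₁ S₂ g := by
  funext x
  show extEnd₂ S₁ S₂ (f * g) x = extEnd₂ S₁ S₂ f (extEnd₂ S₁ S₂ g x)
  by_cases h : (x : V) ∈ S₂
  · rw [extEnd₂_apply_mem S₁ S₂ (f * g) h, extEnd₂_apply_mem S₁ S₂ g h,
      extEnd₂_apply_mem S₁ S₂ f (g ⟨↑x, h⟩).2]
    exact Subtype.ext rfl
  · rw [extEnd₂_apply_not_mem S₁ S₂ (f * g) h, extEnd₂_apply_not_mem S₁ S₂ g h,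
      extEnd₂_apply_not_mem S₁ S₂ f h]

lemma extEnd₁_collapse (S₁ S₂ : Set V) (u₁ w₁ : ↥S₁) :
    extEnd₁ S₁ S₂ (collapse u₁ w₁) =
      collapse (⟨↑u₁, Set.mem_union_left S₂ u₁.2⟩ : ↥(S₁ ∪ S₂))
        (⟨↑w₁, Set.mem_union_left S₂ w₁.2⟩ : ↥(S₁ ∪ S₂)) := by
  funext x
  by_cases h : (x : V) ∈ S₁
  · rw [extEnd₁_apply_mem S₁ S₂ _ h]
    by_cases he : (x : V) = (u₁ : V)
    · have h1 : (⟨↑x, h⟩ : ↥S₁) = u₁ := Subtype.ext he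
      have h2 : x = ⟨↑u₁, Set.mem_union_left S₂ u₁.2⟩ := Subtype.ext he
      have e1 : collapse u₁ w₁ (⟨↑x, h⟩ : ↥S₁) = w₁ := by
        rw [h1]; exact collapse_apply_self _ _
      have e2 : collapse (⟨↑u₁, Set.mem_union_left S₂ u₁.2⟩ : ↥(S₁ ∪ S₂))
          (⟨↑w₁, Set.mem_union_left S₂ w₁.2⟩ : ↥(S₁ ∪ S₂)) x = ⟨↑w₁, Set.mem_union_left S₂ w₁.2⟩ := by
        rw [h2]; exact collapse_apply_self _ _
      refine Subtype.ext ?_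
      show ((collapse u₁ w₁ (⟨↑x, h⟩ : ↥S₁) : ↥S₁) : V) = _
      rw [e1, e2]
    · have h1 : (⟨↑x, h⟩ : ↥S₁) ≠ u₁ := fun he' => he (congrArg Subtype.val he')
      have h2 : x ≠ ⟨↑u₁, Set.mem_union_left S₂ u₁.2⟩ := fun he' => he (congrArg Subtype.val he')
      refine Subtype.ext ?_
      show ((collapse u₁ w₁ (⟨↑x, h⟩ : ↥S₁) : ↥S₁) : V) = _
      rw [collapse_apply_ne h1, collapse_apply_ne h2]
  · rw [extEnd₁_apply_not_mem S₁ S₂ _ h]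
    have h2 : x ≠ ⟨↑u₁, Set.mem_union_left S₂ u₁.2⟩ := fun he' => h (by rw [congrArg Subtype.val he']; exact u₁.2)
    rw [collapse_apply_ne h2]

lemma extEnd₂_collapse (S₁ S₂ : Set V) (u₂ w₂ : ↥S₂) :
    extEnd₂ S₁ S₂ (collapse u₂ w₂) =
      collapse (⟨↑u₂, Set.mem_union_right S₁ u₂.2⟩ : ↥(S₁ ∪ S₂))
        (⟨↑w₂, Set.mem_union_right S₁ w₂.2⟩ : ↥(S₁ ∪ S₂)) := by
  funext x
  by_cases h : (x : V) ∈ S₂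
  · rw [extEnd₂_apply_mem S₁ S₂ _ h]
    by_cases he : (x : V) = (u₂ : V)
    · have h1 : (⟨↑x, h⟩ : ↥S₂) = u₂ := Subtype.ext he
      have h2 : x = ⟨↑u₂, Set.mem_union_right S₁ u₂.2⟩ := Subtype.ext he
      have e1 : collapse u₂ w₂ (⟨↑x, h⟩ : ↥S₂) = w₂ := by
        rw [h1]; exact collapse_apply_self _ _
      have e2 : collapse (⟨↑u₂, Set.mem_union_right S₁ u₂.2⟩ : ↥(S₁ ∪ S₂))
          (⟨↑w₂, Set.mem_union_right S₁ w₂.2⟩ : ↥(S₁ ∪ S₂)) x = ⟨↑w₂, Set.mem_union_right S₁ w₂.2⟩ := by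
        rw [h2]; exact collapse_apply_self _ _
      refine Subtype.ext ?_
      show ((collapse u₂ w₂ (⟨↑x, h⟩ : ↥S₂) : ↥S₂) : V) = _
      rw [e1, e2]
    · have h1 : (⟨↑x, h⟩ : ↥S₂) ≠ u₂ := fun he' => he (congrArg Subtype.val he')
      have h2 : x ≠ ⟨↑u₂, Set.mem_union_right S₁ u₂.2⟩ := fun he' => he (congrArg Subtype.val he')
      refine Subtype.ext ?_
      show ((collapse u₂ w₂ (⟨↑x, h⟩ : ↥S₂) : ↥S₂) : V) = _
      rw [collapse_apply_ne h1, collapse_apply_ne h2]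
  · rw [extEnd₂_apply_not_mem S₁ S₂ _ h]
    have h2 : x ≠ ⟨↑u₂, Set.mem_union_right S₁ u₂.2⟩ := fun he' => h (by rw [congrArg Subtype.val he']; exact u₂.2)
    rw [collapse_apply_ne h2]

lemma extEnd₁_mem (Γ : SimpleGraph V) (S₁ S₂ : Set V) {f : Function.End ↥S₁}
    (hf : f ∈ flowSemigroup (Γ.induce S₁).Adj) :
    extEnd₁ S₁ S₂ f ∈ flowSemigroup (Γ.induce (S₁ ∪ S₂)).Adj := by
  refine Subsemigroup.closure_induction (p := fun t _ =>
    extEnd₁ S₁ S₂ t ∈ flowSemigroup (Γ.induce (S₁ ∪ S₂)).Adj) ?_ ?_ hf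
  · rintro f ⟨u₁, w₁, hadj, rfl⟩
    rw [extEnd₁_collapse]
    have hadj' : (Γ.induce (S₁ ∪ S₂)).Adj ⟨↑u₁, Set.mem_union_left S₂ u₁.2⟩
        ⟨↑w₁, Set.mem_union_left S₂ w₁.2⟩ := hadj
    exact Subsemigroup.subset_closure ⟨_, _, hadj', rfl⟩
  · intro a b _ _ ha hb
    rw [extEnd₁_mul]
    exact mul_mem ha hb

lemma extEnd₂_mem (Γ : SimpleGraph V) (S₁ S₂ : Set V) {f : Function.End ↥S₂}
    (hf : f ∈ flowSemigroup (Γ.induce S₂).Adj) :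
    extEnd₂ S₁ S₂ f ∈ flowSemigroup (Γ.induce (S₁ ∪ S₂)).Adj := by
  refine Subsemigroup.closure_induction (p := fun t _ =>
    extEnd₂ S₁ S₂ t ∈ flowSemigroup (Γ.induce (S₁ ∪ S₂)).Adj) ?_ ?_ hf
  · rintro f ⟨u₂, w₂, hadj, rfl⟩
    rw [extEnd₂_collapse]
    have hadj' : (Γ.induce (S₁ ∪ S₂)).Adj ⟨↑u₂, Set.mem_union_right S₁ u₂.2⟩
        ⟨↑w₂, Set.mem_union_right S₁ w₂.2⟩ := hadj
    exact Subsemigroup.subset_closure ⟨_, _, hadj', rfl⟩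
  · intro a b _ _ ha hb
    rw [extEnd₂_mul]
    exact mul_mem ha hb

end Ext

section Directions
variable [Fintype V] [DecidableEq V]

lemma left_embed (Γ : SimpleGraph V) (S₁ S₂ : Set V) (v : V)
    (hv₁ : v ∈ S₁) (hv₂ : v ∈ S₂) (hinter : S₁ ∩ S₂ = {v}) :
    defectGroup (Γ.induce S₁).Adj ({⟨v, hv₁⟩} : Set ↥S₁) ≤
      Subgroup.comap ((jmap S₁ S₂ v hv₁ hv₂ hinter).comp (MonoidHom.inl _ _))
        (defectGroup (Γ.induce (S₁ ∪ S₂)).Adj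
          ({⟨v, Set.mem_union_left S₂ hv₁⟩} : Set ↥(S₁ ∪ S₂))) := by
  rw [defectGroup]
  apply (Subgroup.closure_le _).mpr
  rintro q ⟨s₁, hs₁mem, hs₁K, hs₁match⟩
  show jmap S₁ S₂ v hv₁ hv₂ hinter (q, 1) ∈
    defectGroup (Γ.induce (S₁ ∪ S₂)).Adj
      ({⟨v, Set.mem_union_left S₂ hv₁⟩} : Set ↥(S₁ ∪ S₂))
  apply Subgroup.subset_closure
  refine ⟨extEnd₁ S₁ S₂ s₁, extEnd₁_mem Γ S₁ S₂ hs₁mem, ?_, ?_⟩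
  · intro x hx
    have hx' : x = ⟨v, Set.mem_union_left S₂ hv₁⟩ := hx
    subst hx'
    rw [extEnd₁_apply_mem S₁ S₂ s₁
      (show ((⟨v, Set.mem_union_left S₂ hv₁⟩ : ↥(S₁ ∪ S₂)) : V) ∈ S₁ from hv₁)]
    intro hm
    have hval : ((s₁ ⟨v, hv₁⟩ : ↥S₁) : V) = v := by
      have h0 := Set.mem_singleton_iff.mp hm
      exact congrArg Subtype.val h0
    exact hs₁K ⟨v, hv₁⟩ rfl (Subtype.ext hval)
  · intro x hx
    by_cases h1 : (x : V) ∈ S₁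
    · have hne : (⟨↑x, h1⟩ : ↥S₁) ∉ ({⟨v, hv₁⟩} : Set ↥S₁) := by
        intro hm
        have h0 : ((⟨↑x, h1⟩ : ↥S₁) : V) = v :=
          congrArg Subtype.val (Set.mem_singleton_iff.mp hm)
        exact hx (Subtype.ext h0)
      rw [extEnd₁_apply_mem S₁ S₂ s₁ h1]
      refine Subtype.ext ?_
      show ((s₁ ⟨↑x, h1⟩ : ↥S₁) : V) = _
      rw [jmap_apply,
        theEquiv_apply_of_mem S₁ S₂ v hv₁ hv₂ hinter (x := ⟨x, hx⟩) (y := ⟨⟨↑x, h1⟩, hne⟩) rfl,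
        show Sum.map (⇑q) (⇑(1 : Equiv.Perm {x : ↥S₂ // x ∉ ({⟨v, hv₂⟩} : Set ↥S₂)}))
          (Sum.inl (⟨⟨↑x, h1⟩, hne⟩ : {x : ↥S₁ // x ∉ ({⟨v, hv₁⟩} : Set ↥S₁)})) =
          Sum.inl (q ⟨⟨↑x, h1⟩, hne⟩) from rfl,
        theEquiv_symm_inl]
      exact congrArg Subtype.val (hs₁match ⟨↑x, h1⟩ hne)
    · have h2 : (x : V) ∈ S₂ := x.2.resolve_left h1
      have hne : (⟨↑x, h2⟩ : ↥S₂) ∉ ({⟨v, hv₂⟩} : Set ↥S₂) := by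
        intro hm
        have h0 : ((⟨↑x, h2⟩ : ↥S₂) : V) = v :=
          congrArg Subtype.val (Set.mem_singleton_iff.mp hm)
        exact hx (Subtype.ext h0)
      rw [extEnd₁_apply_not_mem S₁ S₂ s₁ h1]
      refine Subtype.ext ?_
      show ((x : ↥(S₁ ∪ S₂)) : V) = _
      rw [jmap_apply,
        theEquiv_apply_of_mem' S₁ S₂ v hv₁ hv₂ hinter (x := ⟨x, hx⟩) (y := ⟨⟨↑x, h2⟩, hne⟩) rfl,
        show Sum.map (⇑q) (⇑(1 : Equiv.Perm {x : ↥S₂ // x ∉ ({⟨v, hv₂⟩} : Set ↥S₂)}))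
          (Sum.inr (⟨⟨↑x, h2⟩, hne⟩ : {x : ↥S₂ // x ∉ ({⟨v, hv₂⟩} : Set ↥S₂)})) =
          Sum.inr ⟨⟨↑x, h2⟩, hne⟩ from rfl,
        theEquiv_symm_inr]

lemma right_embed (Γ : SimpleGraph V) (S₁ S₂ : Set V) (v : V)
    (hv₁ : v ∈ S₁) (hv₂ : v ∈ S₂) (hinter : S₁ ∩ S₂ = {v}) :
    defectGroup (Γ.induce S₂).Adj ({⟨v, hv₂⟩} : Set ↥S₂) ≤
      Subgroup.comap ((jmap S₁ S₂ v hv₁ hv₂ hinter).comp (MonoidHom.inr _ _))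
        (defectGroup (Γ.induce (S₁ ∪ S₂)).Adj
          ({⟨v, Set.mem_union_left S₂ hv₁⟩} : Set ↥(S₁ ∪ S₂))) := by
  rw [defectGroup]
  apply (Subgroup.closure_le _).mpr
  rintro q ⟨s₂, hs₂mem, hs₂K, hs₂match⟩
  show jmap S₁ S₂ v hv₁ hv₂ hinter (1, q) ∈
    defectGroup (Γ.induce (S₁ ∪ S₂)).Adj
      ({⟨v, Set.mem_union_left S₂ hv₁⟩} : Set ↥(S₁ ∪ S₂))
  apply Subgroup.subset_closure
  refine ⟨extEnd₂ S₁ S₂ s₂, extEnd₂_mem Γ S₁ S₂ hs₂mem, ?_, ?_⟩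
  · intro x hx
    have hx' : x = ⟨v, Set.mem_union_left S₂ hv₁⟩ := hx
    subst hx'
    rw [extEnd₂_apply_mem S₁ S₂ s₂
      (show ((⟨v, Set.mem_union_left S₂ hv₁⟩ : ↥(S₁ ∪ S₂)) : V) ∈ S₂ from hv₂)]
    intro hm
    have hval : ((s₂ ⟨v, hv₂⟩ : ↥S₂) : V) = v := by
      have h0 := Set.mem_singleton_iff.mp hm
      exact congrArg Subtype.val h0
    exact hs₂K ⟨v, hv₂⟩ rfl (Subtype.ext hval)
  · intro x hx
    by_cases h2 : (x : V) ∈ S₂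
    · have hne : (⟨↑x, h2⟩ : ↥S₂) ∉ ({⟨v, hv₂⟩} : Set ↥S₂) := by
        intro hm
        have h0 : ((⟨↑x, h2⟩ : ↥S₂) : V) = v :=
          congrArg Subtype.val (Set.mem_singleton_iff.mp hm)
        exact hx (Subtype.ext h0)
      rw [extEnd₂_apply_mem S₁ S₂ s₂ h2]
      refine Subtype.ext ?_
      show ((s₂ ⟨↑x, h2⟩ : ↥S₂) : V) = _
      rw [jmap_apply,
        theEquiv_apply_of_mem' S₁ S₂ v hv₁ hv₂ hinter (x := ⟨x, hx⟩) (y := ⟨⟨↑x, h2⟩, hne⟩) rfl,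
        show Sum.map (⇑(1 : Equiv.Perm {x : ↥S₁ // x ∉ ({⟨v, hv₁⟩} : Set ↥S₁)})) (⇑q)
          (Sum.inr (⟨⟨↑x, h2⟩, hne⟩ : {x : ↥S₂ // x ∉ ({⟨v, hv₂⟩} : Set ↥S₂)})) =
          Sum.inr (q ⟨⟨↑x, h2⟩, hne⟩) from rfl,
        theEquiv_symm_inr]
      exact congrArg Subtype.val (hs₂match ⟨↑x, h2⟩ hne)
    · have h1 : (x : V) ∈ S₁ := x.2.resolve_right h2
      have hne : (⟨↑x, h1⟩ : ↥S₁) ∉ ({⟨v, hv₁⟩} : Set ↥S₁) := by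
        intro hm
        have h0 : ((⟨↑x, h1⟩ : ↥S₁) : V) = v :=
          congrArg Subtype.val (Set.mem_singleton_iff.mp hm)
        exact hx (Subtype.ext h0)
      rw [extEnd₂_apply_not_mem S₁ S₂ s₂ h2]
      refine Subtype.ext ?_
      show ((x : ↥(S₁ ∪ S₂)) : V) = _
      rw [jmap_apply,
        theEquiv_apply_of_mem S₁ S₂ v hv₁ hv₂ hinter (x := ⟨x, hx⟩) (y := ⟨⟨↑x, h1⟩, hne⟩) rfl,
        show Sum.map (⇑(1 : Equiv.Perm {x : ↥S₁ // x ∉ ({⟨v, hv₁⟩} : Set ↥S₁)})) (⇑q)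
          (Sum.inl (⟨⟨↑x, h1⟩, hne⟩ : {x : ↥S₁ // x ∉ ({⟨v, hv₁⟩} : Set ↥S₁)})) =
          Sum.inl ⟨⟨↑x, h1⟩, hne⟩ from rfl,
        theEquiv_symm_inl]

end Directions

section Hard
variable [Fintype V] [DecidableEq V]

lemma defect_le_map (Γ : SimpleGraph V) (S₁ S₂ : Set V) (v : V)
    (hv₁ : v ∈ S₁) (hv₂ : v ∈ S₂) (hinter : S₁ ∩ S₂ = {v})
    (hnoedge : ∀ x ∈ S₁ \ {v}, ∀ y ∈ S₂ \ {v}, ¬ Γ.Adj x y) :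
    defectGroup (Γ.induce (S₁ ∪ S₂)).Adj
        ({⟨v, Set.mem_union_left S₂ hv₁⟩} : Set ↥(S₁ ∪ S₂)) ≤
      Subgroup.map (jmap S₁ S₂ v hv₁ hv₂ hinter)
        ((defectGroup (Γ.induce S₁).Adj ({⟨v, hv₁⟩} : Set ↥S₁)).prod
          (defectGroup (Γ.induce S₂).Adj ({⟨v, hv₂⟩} : Set ↥S₂))) := by
  rw [defectGroup]
  apply (Subgroup.closure_le _).mpr
  rintro p ⟨s, hsmem, hsK, hsmatch⟩
  have hsmatch' : ∀ (x : ↥(S₁ ∪ S₂)) (hx : x ≠ vtxW S₁ S₂ v hv₁), s x = ↑(p ⟨x, hx⟩) :=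
    fun x hx => hsmatch x hx
  have hinj : Set.InjOn s {x : ↥(S₁ ∪ S₂) | x ≠ vtxW S₁ S₂ v hv₁} := by
    intro x hx y hy hxy
    have hx' : x ≠ vtxW S₁ S₂ v hv₁ := hx
    have hy' : y ≠ vtxW S₁ S₂ v hv₁ := hy
    rw [hsmatch' x hx', hsmatch' y hy'] at hxy
    exact congrArg Subtype.val (p.injective (Subtype.coe_injective hxy))
  obtain ⟨⟨h, hInv⟩, ⟨t₁, ht₁, hrel₁⟩, ⟨t₂, ht₂, hrel₂⟩⟩ :=
    good_of_flow Γ S₁ S₂ v hv₁ hv₂ hinter hnoedge hsmem hinj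
  have himg_ne : ∀ (X : Set ↥(S₁ ∪ S₂)), (∀ z ∈ X, z ≠ vtxW S₁ S₂ v hv₁) →
      vtxW S₁ S₂ v hv₁ ∉ s '' X := by
    rintro X hX ⟨x, hxX, hxv⟩
    have hxne := hX x hxX
    rw [hsmatch' x hxne] at hxv
    exact (p ⟨x, hxne⟩).2 hxv
  have hh : h = vtxW S₁ S₂ v hv₁ := by
    rcases hInv with ⟨he, _, _⟩ | ⟨hhA, hA2, _⟩ | ⟨hhB, hB2, _⟩
    · exact he
    · exfalso
      apply himg_ne (sideA S₁ S₂ v) (fun z hz => sideA_ne_vtxW S₁ S₂ v hv₁ hz)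
      rw [hA2]; exact Or.inl rfl
    · exfalso
      apply himg_ne (sideB S₁ S₂ v) (fun z hz => sideB_ne_vtxW S₁ S₂ v hv₁ hz)
      rw [hB2]; exact Or.inl rfl
  subst hh
  obtain ⟨hA2, hB2⟩ : s '' sideA S₁ S₂ v = sideA S₁ S₂ v ∧
      s '' sideB S₁ S₂ v = sideB S₁ S₂ v := by
    rcases hInv with ⟨_, a, b⟩ | ⟨hhA, _, _⟩ | ⟨hhB, _, _⟩
    · exact ⟨a, b⟩
    · exact absurd hhA (vtxW_not_sideA S₁ S₂ v hv₁)
    · exact absurd hhB (vtxW_not_sideB S₁ S₂ v hv₁)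
  -- construct p₁
  have HP1 : ∃ p₁ : Equiv.Perm {x : ↥S₁ // x ∉ ({⟨v, hv₁⟩} : Set ↥S₁)},
      p₁ ∈ (defectGroup (Γ.induce S₁).Adj ({⟨v, hv₁⟩} : Set ↥S₁) :
        Subgroup (Equiv.Perm {x : ↥S₁ // x ∉ ({⟨v, hv₁⟩} : Set ↥S₁)})) ∧
      ∀ (y : {x : ↥S₁ // x ∉ ({⟨v, hv₁⟩} : Set ↥S₁)}),
        ((p₁ y : ↥S₁) : V) =
          ((s ⟨↑↑y, Set.mem_union_left S₂ (y : ↥S₁).2⟩ : ↥(S₁ ∪ S₂)) : V) := by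
    have hyne : ∀ (a : ↥S₁), a ∉ ({⟨v, hv₁⟩} : Set ↥S₁) → (a : V) ≠ v := by
      intro a ha hav
      exact ha (Set.mem_singleton_iff.mpr (Subtype.ext hav))
    have hmemA : ∀ (a : ↥S₁), (a : V) ≠ v →
        (⟨↑a, Set.mem_union_left S₂ a.2⟩ : ↥(S₁ ∪ S₂)) ∈ sideA S₁ S₂ v :=
      fun a ha => ⟨a.2, ha⟩
    have hNV : ∀ (a : ↥S₁), (a : V) ≠ v → ((t₁ a : ↥S₁) : V) ≠ v := by
      intro a ha
      rw [hrel₁ a ha]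
      have hmem : s ⟨↑a, Set.mem_union_left S₂ a.2⟩ ∈ sideA S₁ S₂ v := by
        rw [← hA2]; exact Set.mem_image_of_mem s (hmemA a ha)
      exact hmem.2
    have hIA : ∀ (a b : ↥S₁), (a : V) ≠ v → (b : V) ≠ v → t₁ a = t₁ b → a = b := by
      intro a b ha hb hab
      have h2 : s ⟨↑a, Set.mem_union_left S₂ a.2⟩ = s ⟨↑b, Set.mem_union_left S₂ b.2⟩ :=
        Subtype.ext (by rw [← hrel₁ a ha, ← hrel₁ b hb, hab])
      have h3 := hinj
        (show (⟨↑a, Set.mem_union_left S₂ a.2⟩ : ↥(S₁ ∪ S₂)) ≠ vtxW S₁ S₂ v hv₁ from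
          fun e => ha (congrArg Subtype.val e))
        (show (⟨↑b, Set.mem_union_left S₂ b.2⟩ : ↥(S₁ ∪ S₂)) ≠ vtxW S₁ S₂ v hv₁ from
          fun e => hb (congrArg Subtype.val e)) h2
      exact Subtype.ext (congrArg (Subtype.val : ↥(S₁ ∪ S₂) → V) h3)
    rcases ht₁ with rfl | ht₁m
    · refine ⟨1, one_mem _, ?_⟩
      intro y
      exact hrel₁ ↑y (hyne ↑y y.2)
    · have hf₁ : ∀ y : {x : ↥S₁ // x ∉ ({⟨v, hv₁⟩} : Set ↥S₁)},
          t₁ ↑y ∉ ({⟨v, hv₁⟩} : Set ↥S₁) := by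
        intro y hm
        exact hNV ↑y (hyne ↑y y.2) (congrArg Subtype.val (Set.mem_singleton_iff.mp hm))
      have hinj₁ : Function.Injective
          (fun y : {x : ↥S₁ // x ∉ ({⟨v, hv₁⟩} : Set ↥S₁)} =>
            (⟨t₁ ↑y, hf₁ y⟩ : {x : ↥S₁ // x ∉ ({⟨v, hv₁⟩} : Set ↥S₁)})) := by
        intro y z hyz
        have h1 : t₁ ↑y = t₁ ↑z := congrArg Subtype.val hyz
        exact Subtype.ext (hIA ↑y ↑z (hyne ↑y y.2) (hyne ↑z z.2) h1)
      refine ⟨Equiv.ofBijective _ (Finite.injective_iff_bijective.mp hinj₁), ?_, ?_⟩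
      · apply Subgroup.subset_closure
        refine ⟨t₁, ht₁m, ?_, ?_⟩
        · intro x hx
          have hx' : x = ⟨v, hv₁⟩ := hx
          subst hx'
          intro hm
          have h0 : t₁ (⟨v, hv₁⟩ : ↥S₁) = ⟨v, hv₁⟩ := Set.mem_singleton_iff.mp hm
          have hninj := flow_not_injective
            (fun a b hab => hab.ne) ht₁m
          apply hninj
          intro a b hab
          by_cases ha : (a : V) = v
          · by_cases hb : (b : V) = v
            · exact Subtype.ext (ha.trans hb.symm)
            · exfalso
              apply hNV b hb
              have haa : a = (⟨v, hv₁⟩ : ↥S₁) := Subtype.ext ha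
              rw [← hab, haa, h0]
          · by_cases hb : (b : V) = v
            · exfalso
              apply hNV a ha
              have hbb : b = (⟨v, hv₁⟩ : ↥S₁) := Subtype.ext hb
              rw [hab, hbb, h0]
            · exact hIA a b ha hb hab
        · intro x hx
          rfl
      · intro y
        exact hrel₁ ↑y (hyne ↑y y.2)
  have HP2 : ∃ p₂ : Equiv.Perm {x : ↥S₂ // x ∉ ({⟨v, hv₂⟩} : Set ↥S₂)},
      p₂ ∈ (defectGroup (Γ.induce S₂).Adj ({⟨v, hv₂⟩} : Set ↥S₂) :
        Subgroup (Equiv.Perm {x : ↥S₂ // x ∉ ({⟨v, hv₂⟩} : Set ↥S₂)})) ∧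
      ∀ (y : {x : ↥S₂ // x ∉ ({⟨v, hv₂⟩} : Set ↥S₂)}),
        ((p₂ y : ↥S₂) : V) =
          ((s ⟨↑↑y, Set.mem_union_right S₁ (y : ↥S₂).2⟩ : ↥(S₁ ∪ S₂)) : V) := by
    have hyne : ∀ (a : ↥S₂), a ∉ ({⟨v, hv₂⟩} : Set ↥S₂) → (a : V) ≠ v := by
      intro a ha hav
      exact ha (Set.mem_singleton_iff.mpr (Subtype.ext hav))
    have hmemB : ∀ (a : ↥S₂), (a : V) ≠ v →
        (⟨↑a, Set.mem_union_right S₁ a.2⟩ : ↥(S₁ ∪ S₂)) ∈ sideB S₁ S₂ v :=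
      fun a ha => ⟨a.2, ha⟩
    have hNV : ∀ (a : ↥S₂), (a : V) ≠ v → ((t₂ a : ↥S₂) : V) ≠ v := by
      intro a ha
      rw [hrel₂ a ha]
      have hmem : s ⟨↑a, Set.mem_union_right S₁ a.2⟩ ∈ sideB S₁ S₂ v := by
        rw [← hB2]; exact Set.mem_image_of_mem s (hmemB a ha)
      exact hmem.2
    have hIA : ∀ (a b : ↥S₂), (a : V) ≠ v → (b : V) ≠ v → t₂ a = t₂ b → a = b := by
      intro a b ha hb hab
      have h2 : s ⟨↑a, Set.mem_union_right S₁ a.2⟩ = s ⟨↑b, Set.mem_union_right S₁ b.2⟩ :=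
        Subtype.ext (by rw [← hrel₂ a ha, ← hrel₂ b hb, hab])
      have h3 := hinj
        (show (⟨↑a, Set.mem_union_right S₁ a.2⟩ : ↥(S₁ ∪ S₂)) ≠ vtxW S₁ S₂ v hv₁ from
          fun e => ha (congrArg Subtype.val e))
        (show (⟨↑b, Set.mem_union_right S₁ b.2⟩ : ↥(S₁ ∪ S₂)) ≠ vtxW S₁ S₂ v hv₁ from
          fun e => hb (congrArg Subtype.val e)) h2
      exact Subtype.ext (congrArg (Subtype.val : ↥(S₁ ∪ S₂) → V) h3)
    rcases ht₂ with rfl | ht₂m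
    · refine ⟨1, one_mem _, ?_⟩
      intro y
      exact hrel₂ ↑y (hyne ↑y y.2)
    · have hf₂ : ∀ y : {x : ↥S₂ // x ∉ ({⟨v, hv₂⟩} : Set ↥S₂)},
          t₂ ↑y ∉ ({⟨v, hv₂⟩} : Set ↥S₂) := by
        intro y hm
        exact hNV ↑y (hyne ↑y y.2) (congrArg Subtype.val (Set.mem_singleton_iff.mp hm))
      have hinj₂ : Function.Injective
          (fun y : {x : ↥S₂ // x ∉ ({⟨v, hv₂⟩} : Set ↥S₂)} =>
            (⟨t₂ ↑y, hf₂ y⟩ : {x : ↥S₂ // x ∉ ({⟨v, hv₂⟩} : Set ↥S₂)})) := by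
        intro y z hyz
        have h1 : t₂ ↑y = t₂ ↑z := congrArg Subtype.val hyz
        exact Subtype.ext (hIA ↑y ↑z (hyne ↑y y.2) (hyne ↑z z.2) h1)
      refine ⟨Equiv.ofBijective _ (Finite.injective_iff_bijective.mp hinj₂), ?_, ?_⟩
      · apply Subgroup.subset_closure
        refine ⟨t₂, ht₂m, ?_, ?_⟩
        · intro x hx
          have hx' : x = ⟨v, hv₂⟩ := hx
          subst hx'
          intro hm
          have h0 : t₂ (⟨v, hv₂⟩ : ↥S₂) = ⟨v, hv₂⟩ := Set.mem_singleton_iff.mp hm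
          have hninj := flow_not_injective
            (fun a b hab => hab.ne) ht₂m
          apply hninj
          intro a b hab
          by_cases ha : (a : V) = v
          · by_cases hb : (b : V) = v
            · exact Subtype.ext (ha.trans hb.symm)
            · exfalso
              apply hNV b hb
              have haa : a = (⟨v, hv₂⟩ : ↥S₂) := Subtype.ext ha
              rw [← hab, haa, h0]
          · by_cases hb : (b : V) = v
            · exfalso
              apply hNV a ha
              have hbb : b = (⟨v, hv₂⟩ : ↥S₂) := Subtype.ext hb
              rw [hab, hbb, h0]
            · exact hIA a b ha hb hab
        · intro x hx
          rfl
      · intro y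
        exact hrel₂ ↑y (hyne ↑y y.2)
  obtain ⟨p₁, hp₁, key₁⟩ := HP1
  obtain ⟨p₂, hp₂, key₂⟩ := HP2
  refine ⟨(p₁, p₂), Subgroup.mem_prod.mpr ⟨hp₁, hp₂⟩, ?_⟩
  apply Equiv.ext
  intro x
  rw [jmap_apply]
  by_cases h1 : ((x : ↥(S₁ ∪ S₂)) : V) ∈ S₁
  · have hne : (⟨↑↑x, h1⟩ : ↥S₁) ∉ ({⟨v, hv₁⟩} : Set ↥S₁) := by
      intro hm
      have h0 : ((⟨↑↑x, h1⟩ : ↥S₁) : V) = v :=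
        congrArg Subtype.val (Set.mem_singleton_iff.mp hm)
      exact x.2 (Subtype.ext h0)
    rw [theEquiv_apply_of_mem S₁ S₂ v hv₁ hv₂ hinter (y := ⟨⟨↑↑x, h1⟩, hne⟩) rfl,
      show Sum.map (⇑p₁) (⇑p₂)
        (Sum.inl (⟨⟨↑↑x, h1⟩, hne⟩ : {x : ↥S₁ // x ∉ ({⟨v, hv₁⟩} : Set ↥S₁)})) =
        Sum.inl (p₁ ⟨⟨↑↑x, h1⟩, hne⟩) from rfl]
    refine Subtype.ext (Subtype.ext ?_)
    show ((((theEquiv S₁ S₂ v hv₁ hv₂ hinter).symm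
      (Sum.inl (p₁ ⟨⟨↑↑x, h1⟩, hne⟩)) : ↥(S₁ ∪ S₂))) : V) = _
    rw [theEquiv_symm_inl, key₁ ⟨⟨↑↑x, h1⟩, hne⟩]
    have e3 : (⟨↑↑x, Set.mem_union_left S₂ h1⟩ : ↥(S₁ ∪ S₂)) = ↑x := Subtype.ext rfl
    rw [show (⟨↑↑(⟨⟨↑↑x, h1⟩, hne⟩ : {x : ↥S₁ // x ∉ ({⟨v, hv₁⟩} : Set ↥S₁)}),
      Set.mem_union_left S₂ ((⟨⟨↑↑x, h1⟩, hne⟩ :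
        {x : ↥S₁ // x ∉ ({⟨v, hv₁⟩} : Set ↥S₁)}) : ↥S₁).2⟩ : ↥(S₁ ∪ S₂)) = ↑x from
      Subtype.ext rfl]
    rw [hsmatch' ↑x x.2]
  · have h2 : ((x : ↥(S₁ ∪ S₂)) : V) ∈ S₂ := (x : ↥(S₁ ∪ S₂)).2.resolve_left h1
    have hne : (⟨↑↑x, h2⟩ : ↥S₂) ∉ ({⟨v, hv₂⟩} : Set ↥S₂) := by
      intro hm
      have h0 : ((⟨↑↑x, h2⟩ : ↥S₂) : V) = v :=
        congrArg Subtype.val (Set.mem_singleton_iff.mp hm)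
      exact x.2 (Subtype.ext h0)
    rw [theEquiv_apply_of_mem' S₁ S₂ v hv₁ hv₂ hinter (y := ⟨⟨↑↑x, h2⟩, hne⟩) rfl,
      show Sum.map (⇑p₁) (⇑p₂)
        (Sum.inr (⟨⟨↑↑x, h2⟩, hne⟩ : {x : ↥S₂ // x ∉ ({⟨v, hv₂⟩} : Set ↥S₂)})) =
        Sum.inr (p₂ ⟨⟨↑↑x, h2⟩, hne⟩) from rfl]
    refine Subtype.ext (Subtype.ext ?_)
    show ((((theEquiv S₁ S₂ v hv₁ hv₂ hinter).symm
      (Sum.inr (p₂ ⟨⟨↑↑x, h2⟩, hne⟩)) : ↥(S₁ ∪ S₂))) : V) = _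
    rw [theEquiv_symm_inr, key₂ ⟨⟨↑↑x, h2⟩, hne⟩]
    rw [show (⟨↑↑(⟨⟨↑↑x, h2⟩, hne⟩ : {x : ↥S₂ // x ∉ ({⟨v, hv₂⟩} : Set ↥S₂)}),
      Set.mem_union_right S₁ ((⟨⟨↑↑x, h2⟩, hne⟩ :
        {x : ↥S₂ // x ∉ ({⟨v, hv₂⟩} : Set ↥S₂)}) : ↥S₂).2⟩ : ↥(S₁ ∪ S₂)) = ↑x from
      Subtype.ext rfl]
    rw [hsmatch' ↑x x.2]

end Hard

def myProdEquiv {G N : Type*} [Group G] [Group N] (H : Subgroup G) (K : Subgroup N) :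
    (H.prod K) ≃* H × K where
  toFun g := (⟨g.1.1, g.2.1⟩, ⟨g.1.2, g.2.2⟩)
  invFun p := ⟨(↑p.1, ↑p.2), ⟨p.1.2, p.2.2⟩⟩
  left_inv g := rfl
  right_inv p := rfl
  map_mul' a b := rfl

section Final
variable [Fintype V] [DecidableEq V]

lemma map_eq (Γ : SimpleGraph V) (S₁ S₂ : Set V) (v : V)
    (hv₁ : v ∈ S₁) (hv₂ : v ∈ S₂) (hinter : S₁ ∩ S₂ = {v})
    (hnoedge : ∀ x ∈ S₁ \ {v}, ∀ y ∈ S₂ \ {v}, ¬ Γ.Adj x y) :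
    Subgroup.map (jmap S₁ S₂ v hv₁ hv₂ hinter)
        ((defectGroup (Γ.induce S₁).Adj ({⟨v, hv₁⟩} : Set ↥S₁)).prod
          (defectGroup (Γ.induce S₂).Adj ({⟨v, hv₂⟩} : Set ↥S₂))) =
      defectGroup (Γ.induce (S₁ ∪ S₂)).Adj
        ({⟨v, Set.mem_union_left S₂ hv₁⟩} : Set ↥(S₁ ∪ S₂)) := by
  apply le_antisymm
  · rintro y ⟨⟨q₁, q₂⟩, hmem, rfl⟩
    obtain ⟨h1, h2⟩ := Subgroup.mem_prod.mp hmem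
    have hsplit : jmap S₁ S₂ v hv₁ hv₂ hinter (q₁, q₂) =
        jmap S₁ S₂ v hv₁ hv₂ hinter (q₁, 1) * jmap S₁ S₂ v hv₁ hv₂ hinter (1, q₂) := by
      rw [← map_mul]
      congr 1
    rw [hsplit]
    exact mul_mem
      (Subgroup.mem_comap.mp (left_embed Γ S₁ S₂ v hv₁ hv₂ hinter h1))
      (Subgroup.mem_comap.mp (right_embed Γ S₁ S₂ v hv₁ hv₂ hinter h2))
  · exact defect_le_map Γ S₁ S₂ v hv₁ hv₂ hinter hnoedge

end Final


/-- If `Γ₁`, `Γ₂` are connected induced subgraphs of `Γ` meeting in the single vertex `v`,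
with no edges of `Γ` between `Γ₁ ∖ {v}` and `Γ₂ ∖ {v}`, then the defect 1 group of
`Γ₁ ∪ Γ₂` with defect set `{v}` is the direct product of the defect 1 groups of `Γ₁` and
`Γ₂` with defect set `{v}` (via the canonical identification of the underlying sets). -/
theorem stmt4 [Fintype V] [DecidableEq V] (Γ : SimpleGraph V) (S₁ S₂ : Set V) (v : V)
    (hv₁ : v ∈ S₁) (hv₂ : v ∈ S₂)
    (hconn₁ : (Γ.induce S₁).Connected) (hconn₂ : (Γ.induce S₂).Connected)
    (hinter : S₁ ∩ S₂ = {v})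
    (hnoedge : ∀ x ∈ S₁ \ {v}, ∀ y ∈ S₂ \ {v}, ¬ Γ.Adj x y) :
    ∃ (e : {x : ↥(S₁ ∪ S₂) // x ∉ ({⟨v, Set.mem_union_left S₂ hv₁⟩} : Set ↥(S₁ ∪ S₂))} ≃
          ({x : ↥S₁ // x ∉ ({⟨v, hv₁⟩} : Set ↥S₁)} ⊕ {x : ↥S₂ // x ∉ ({⟨v, hv₂⟩} : Set ↥S₂)}))
      (ψ : defectGroup (Γ.induce (S₁ ∪ S₂)).Adj
              ({⟨v, Set.mem_union_left S₂ hv₁⟩} : Set ↥(S₁ ∪ S₂)) ≃*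
          defectGroup (Γ.induce S₁).Adj ({⟨v, hv₁⟩} : Set ↥S₁) ×
            defectGroup (Γ.induce S₂).Adj ({⟨v, hv₂⟩} : Set ↥S₂)),
      (∀ x, Sum.elim
          (fun (y : {x : ↥S₁ // x ∉ ({⟨v, hv₁⟩} : Set ↥S₁)}) => ((y : ↥S₁) : V))
          (fun (y : {x : ↥S₂ // x ∉ ({⟨v, hv₂⟩} : Set ↥S₂)}) => ((y : ↥S₂) : V)) (e x)
          = ((x : ↥(S₁ ∪ S₂)) : V)) ∧
      ∀ (g : defectGroup (Γ.induce (S₁ ∪ S₂)).Adj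
              ({⟨v, Set.mem_union_left S₂ hv₁⟩} : Set ↥(S₁ ∪ S₂)))
        (x : {x : ↥(S₁ ∪ S₂) // x ∉ ({⟨v, Set.mem_union_left S₂ hv₁⟩} : Set ↥(S₁ ∪ S₂))}),
        e ((g : Equiv.Perm _) x) =
          Sum.map (fun z => ((ψ g).1 : Equiv.Perm _) z) (fun z => ((ψ g).2 : Equiv.Perm _) z)
            (e x) := by
  have hmapeq := map_eq Γ S₁ S₂ v hv₁ hv₂ hinter hnoedge
  let P := (defectGroup (Γ.induce S₁).Adj ({⟨v, hv₁⟩} : Set ↥S₁)).prod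
    (defectGroup (Γ.induce S₂).Adj ({⟨v, hv₂⟩} : Set ↥S₂))
  let M1 : P ≃* P.map (jmap S₁ S₂ v hv₁ hv₂ hinter) :=
    Subgroup.equivMapOfInjective P _ (jmap_injective S₁ S₂ v hv₁ hv₂ hinter)
  let M2 := MulEquiv.subgroupCongr hmapeq.symm
  refine ⟨theEquiv S₁ S₂ v hv₁ hv₂ hinter,
    (M2.trans M1.symm).trans (myProdEquiv _ _), ?_, ?_⟩
  · intro x
    by_cases h1 : ((x : ↥(S₁ ∪ S₂)) : V) ∈ S₁
    · have hne : (⟨↑↑x, h1⟩ : ↥S₁) ∉ ({⟨v, hv₁⟩} : Set ↥S₁) := by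
        intro hm
        have h0 : ((⟨↑↑x, h1⟩ : ↥S₁) : V) = v :=
          congrArg Subtype.val (Set.mem_singleton_iff.mp hm)
        exact x.2 (Subtype.ext h0)
      rw [theEquiv_apply_of_mem S₁ S₂ v hv₁ hv₂ hinter (y := ⟨⟨↑↑x, h1⟩, hne⟩) rfl]
      rfl
    · have h2 : ((x : ↥(S₁ ∪ S₂)) : V) ∈ S₂ := (x : ↥(S₁ ∪ S₂)).2.resolve_left h1
      have hne : (⟨↑↑x, h2⟩ : ↥S₂) ∉ ({⟨v, hv₂⟩} : Set ↥S₂) := by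
        intro hm
        have h0 : ((⟨↑↑x, h2⟩ : ↥S₂) : V) = v :=
          congrArg Subtype.val (Set.mem_singleton_iff.mp hm)
        exact x.2 (Subtype.ext h0)
      rw [theEquiv_apply_of_mem' S₁ S₂ v hv₁ hv₂ hinter (y := ⟨⟨↑↑x, h2⟩, hne⟩) rfl]
      rfl
  · intro g x
    set ψ := (M2.trans M1.symm).trans (myProdEquiv _ _) with hψ
    have hq : jmap S₁ S₂ v hv₁ hv₂ hinter (↑(ψ g).1, ↑(ψ g).2) = (↑g : Equiv.Perm _) := by
      have e1 : ((↑(ψ g).1, ↑(ψ g).2) :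
          Equiv.Perm {x : ↥S₁ // x ∉ ({⟨v, hv₁⟩} : Set ↥S₁)} ×
          Equiv.Perm {x : ↥S₂ // x ∉ ({⟨v, hv₂⟩} : Set ↥S₂)}) = ↑(M1.symm (M2 g)) := rfl
      rw [e1]
      calc jmap S₁ S₂ v hv₁ hv₂ hinter ↑(M1.symm (M2 g))
          = ↑(M1 (M1.symm (M2 g))) :=
            (Subgroup.coe_equivMapOfInjective_apply _ _ _ _).symm
        _ = ↑(M2 g) := by rw [MulEquiv.apply_symm_apply]
        _ = ↑g := rfl
    have := theEquiv_jmap S₁ S₂ v hv₁ hv₂ hinter (↑(ψ g).1, ↑(ψ g).2) x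
    rw [hq] at this
    exact this
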